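/- Let F be a subfield of ℂ and let b ∈ F. Then every complex root x of the ninth-degree equation (x³ + x + b)³ + x³ + 2b = 0 is solvable by radicals over F, i.e. x lies in the subfield solvableByRad F ℂ of elements of ℂ obtainable from F by field operations and extraction of n-th roots. -/

import Mathlib

theorem stmt_19 (F : Subfield ℂ) (b : ℂ) (hb : b ∈ F) (x : ℂ)
    (hx : (x ^ 3 + x + b) ^ 3 + x ^ 3 + 2 * b = 0) :
    x ∈ solvableByRad F ℂ := by
  set S := solvableByRad F ℂ with hSdef
  have hrad : ∀ (a : ℂ) (n : ℕ), n ≠ 0 → a ^ n ∈ S → a ∈ S :=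
    fun a n hn h => solvableByRad.rad_mem hn h
  have hbS : b ∈ S := S.algebraMap_mem ⟨b, hb⟩
  have h1S : (1 : ℂ) ∈ S := S.one_mem
  have h2S : (2 : ℂ) ∈ S := by
    have := S.add_mem h1S h1S; norm_num at this ⊢
  have h3S : (3 : ℂ) ∈ S := by
    have := S.add_mem h2S h1S; norm_num at this ⊢
  have h4S : (4 : ℂ) ∈ S := by
    have := S.add_mem h2S h2S; norm_num at this ⊢
  have h8S : (8 : ℂ) ∈ S := by
    have := S.add_mem h4S h4S; norm_num at this ⊢
  have hm3S : (-3 : ℂ) ∈ S := S.neg_mem h3S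
  -- the nonic factors
  have hfac : (x ^ 3 + b) *
      (x ^ 6 + 3 * x ^ 4 + 2 * b * x ^ 3 + 3 * x ^ 2 + 3 * b * x + b ^ 2 + 2) = 0 := by
    linear_combination hx
  rcases mul_eq_zero.1 hfac with h1 | h6
  · -- case x ^ 3 = -b
    refine hrad x 3 (by norm_num) ?_
    have h3 : x ^ 3 = -b := by linear_combination h1
    rw [h3]; exact S.neg_mem hbS
  · -- sextic case
    obtain ⟨r, hr⟩ := IsAlgClosed.exists_pow_nat_eq (b ^ 2 + 4) (n := 2) (by norm_num)
    have hrS : r ∈ S := hrad r 2 (by norm_num) (by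
      rw [hr]; exact S.add_mem (S.pow_mem hbS 2) h4S)
    obtain ⟨c, hc⟩ := IsAlgClosed.exists_pow_nat_eq ((b + r) / 2) (n := 3) (by norm_num)
    have hcS : c ∈ S := hrad c 3 (by norm_num) (by
      rw [hc]; exact S.div_mem (S.add_mem hbS hrS) h2S)
    have hc0 : c ≠ 0 := by
      intro h
      rw [h] at hc
      have h4 : (4 : ℂ) = 0 := by linear_combination 2 * (b - r) * hc - hr
      norm_num at h4
    -- d = 1/c, with c*d = 1 and c^3 - d^3 = b
    set d : ℂ := -c ^ 2 * (b - r) / 2 with hd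
    have hcd : c * d = 1 := by
      rw [hd]; linear_combination (-(b - r) / 2) * hc + (1 / 4) * hr
    have hdS : d ∈ S := by
      rw [hd]
      exact S.div_mem (S.mul_mem (S.neg_mem (S.pow_mem hcS 2)) (S.sub_mem hbS hrS)) h2S
    have hc3 : c ^ 3 - d ^ 3 = b := by
      rw [hd]
      linear_combination (1 - r ^ 4 / 16 + b * r ^ 3 / 8 - b ^ 3 * r / 8 + b ^ 4 / 16
        - c ^ 3 * r ^ 3 / 8 + 3 * c ^ 3 * b * r ^ 2 / 8 - 3 * c ^ 3 * b ^ 2 * r / 8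
        + c ^ 3 * b ^ 3 / 8) * hc
        + (-r / 8 - r ^ 3 / 32 + b / 8 + b * r ^ 2 / 32 + b ^ 2 * r / 32 - b ^ 3 / 32) * hr
    -- cube root of unity
    obtain ⟨t, ht⟩ := IsAlgClosed.exists_pow_nat_eq (-3 : ℂ) (n := 2) (by norm_num)
    have htS : t ∈ S := hrad t 2 (by norm_num) (by rw [ht]; exact hm3S)
    set ω : ℂ := (-1 + t) / 2 with hwdef
    have hw : ω ^ 2 + ω + 1 = 0 := by
      rw [hwdef]; linear_combination (1 / 4) * ht
    have hwS : ω ∈ S := by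
      rw [hwdef]
      exact S.div_mem (S.add_mem (S.neg_mem h1S) htS) h2S
    -- s = x^3 + 2x + b is a root of z^3 + 3z - b
    set s : ℂ := x ^ 3 + 2 * x + b with hsdef
    have hcube : s ^ 3 + 3 * s - b = 0 := by
      rw [hsdef]; linear_combination (x ^ 3 + 3 * x + b) * h6
    -- factor the cubic
    have hprod : (s - (c - d)) * (s - (ω * c - ω ^ 2 * d)) * (s - (ω ^ 2 * c - ω * d)) = 0 := by
      linear_combination hcube - (d ^ 3 - d ^ 3 * ω + c * d ^ 2 * ω ^ 2 - c ^ 2 * d * ω ^ 2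
        - c ^ 3 + c ^ 3 * ω - s * d ^ 2 * ω + 3 * s * c * d - s * c * d * ω
        + s * c * d * ω ^ 2 - s * c ^ 2 * ω - s ^ 2 * d + s ^ 2 * c) * hw
        + 3 * s * hcd - hc3
    have hsS : s ∈ S := by
      rcases mul_eq_zero.1 hprod with h | h
      · rcases mul_eq_zero.1 h with h | h
        · rw [sub_eq_zero.mp h]; exact S.sub_mem hcS hdS
        · rw [sub_eq_zero.mp h]
          exact S.sub_mem (S.mul_mem hwS hcS) (S.mul_mem (S.pow_mem hwS 2) hdS)
      · rw [sub_eq_zero.mp h]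
        exact S.sub_mem (S.mul_mem (S.pow_mem hwS 2) hcS) (S.mul_mem hwS hdS)
    -- x satisfies x^2 - s*x + (s^2 + 2) = 0
    have hquad : x ^ 2 - s * x + (s ^ 2 + 2) = 0 := by
      rw [hsdef]; linear_combination h6
    obtain ⟨q, hq⟩ := IsAlgClosed.exists_pow_nat_eq (-3 * s ^ 2 - 8) (n := 2) (by norm_num)
    have hqS : q ∈ S := hrad q 2 (by norm_num) (by
      rw [hq]
      exact S.sub_mem (S.mul_mem hm3S (S.pow_mem hsS 2)) h8S)
    have hx2 : (x - (s + q) / 2) * (x - (s - q) / 2) = 0 := by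
      linear_combination hquad - (1 / 4) * hq
    rcases mul_eq_zero.1 hx2 with h | h
    · rw [sub_eq_zero.mp h]
      exact S.div_mem (S.add_mem hsS hqS) h2S
    · rw [sub_eq_zero.mp h]
      exact S.div_mem (S.sub_mem hsS hqS) h2S
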